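/- Let 0<q<p be coprime with p/q=[a_1,...,a_n], a_i≥2, q* the inverse of q mod p (0<q*<p), and s(q,p) the Dedekind sum. Then 12 s(q,p) = Σ_{j=1}^n (a_j - 3) + (q+q*)/p. -/

import Mathlib

open Finset

private lemma hz_Ico_succ {b : ℤ} (h : 1 ≤ b) :
    Finset.Ico (1 : ℤ) (b + 1) = insert b (Finset.Ico (1 : ℤ) b) := by
  ext x; simp [Finset.mem_Ico]; omega

private lemma hz_sum_id (p : ℤ) (hp : 1 ≤ p) :
    2 * ∑ i ∈ Ico (1 : ℤ) p, i = p * (p - 1) := by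
  refine Int.le_induction (motive := fun p _ => 2 * ∑ i ∈ Ico (1:ℤ) p, i = p * (p - 1))
    (by simp) (fun n hn ih => ?_) p hp
  rw [hz_Ico_succ hn, Finset.sum_insert (by simp)]
  ring_nf; ring_nf at ih; linarith

private lemma hz_sum_sq (p : ℤ) (hp : 1 ≤ p) :
    6 * ∑ i ∈ Ico (1 : ℤ) p, i ^ 2 = (p - 1) * p * (2 * p - 1) := by
  refine Int.le_induction (motive := fun p _ => 6 * ∑ i ∈ Ico (1:ℤ) p, i ^ 2 = (p - 1) * p * (2 * p - 1))
    (by simp) (fun n hn ih => ?_) p hp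
  rw [hz_Ico_succ hn, Finset.sum_insert (by simp)]
  ring_nf; ring_nf at ih; linarith

private lemma hz_maxsum (h : ℤ → ℤ) (q : ℤ) (hq : 1 ≤ q) :
    ∑ j ∈ Ico (1 : ℤ) q, ∑ k ∈ Ico (1 : ℤ) q, h (max j k)
      = ∑ m ∈ Ico (1 : ℤ) q, (2 * m - 1) * h m := by
  refine Int.le_induction (motive := fun q _ => ∑ j ∈ Ico (1 : ℤ) q, ∑ k ∈ Ico (1 : ℤ) q, h (max j k)
      = ∑ m ∈ Ico (1 : ℤ) q, (2 * m - 1) * h m) (by simp) (fun n hn ih => ?_) q hq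
  rw [hz_Ico_succ hn]
  rw [Finset.sum_insert (by simp), Finset.sum_insert (by simp), Finset.sum_insert (by simp)]
  have e1 : ∀ k ∈ Ico (1:ℤ) n, max n k = n := fun k hk => by
    simp [Finset.mem_Ico] at hk; omega
  have e2 : ∀ j ∈ Ico (1:ℤ) n, max j n = n := fun j hj => by
    simp [Finset.mem_Ico] at hj; omega
  rw [Finset.sum_congr rfl (fun k hk => by rw [e1 k hk])]
  have e3 : ∀ j ∈ Ico (1:ℤ) n, (∑ k ∈ insert n (Ico (1:ℤ) n), h (max j k))
      = h n + ∑ k ∈ Ico (1:ℤ) n, h (max j k) := fun j hj => by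
    rw [Finset.sum_insert (by simp), e2 j hj]
  rw [Finset.sum_congr rfl e3, Finset.sum_add_distrib, ih]
  rw [Finset.sum_const, Int.card_Ico, max_self, nsmul_eq_mul,
    Int.toNat_of_nonneg (by omega : (0:ℤ) ≤ n - 1)]
  ring

private lemma hz_not_dvd {p q i : ℤ} (hp : 0 < p) (hcop : Int.gcd p q = 1)
    (h1 : 0 < i) (h2 : i < p) : ¬ p ∣ i * q := by
  intro hd
  have hco : IsCoprime p q := Int.isCoprime_iff_gcd_eq_one.mpr hcop
  have : p ∣ i := hco.dvd_of_dvd_mul_right hd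
  have := Int.le_of_dvd h1 this
  omega

private lemma hz_emod_pos {p a : ℤ} (hp : 0 < p) (h : ¬ p ∣ a) :
    0 < a % p ∧ a % p < p := by
  have h1 := Int.emod_nonneg a (ne_of_gt hp)
  have h2 := Int.emod_lt_of_pos a hp
  have h3 : a % p ≠ 0 := fun hz => h (Int.dvd_of_emod_eq_zero hz)
  omega

private lemma hz_neg_emod {p a : ℤ} (hp : 0 < p) (h : ¬ p ∣ a) :
    (-a) % p = p - a % p := by
  obtain ⟨h1, h2⟩ := hz_emod_pos hp h
  have hd : p ∣ (-a - (p - a % p)) := ⟨-(a / p) - 1, by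
    linear_combination Int.emod_add_mul_ediv a p⟩
  have : (-a) % p = (p - a % p) % p :=
    Int.emod_eq_emod_iff_emod_sub_eq_zero.mpr (Int.emod_eq_zero_of_dvd hd)
  rw [this, Int.emod_eq_of_lt (by omega) (by omega)]

private lemma hz_neg_ediv {p a : ℤ} (hp : 0 < p) (h : ¬ p ∣ a) :
    (-a) / p = -(a / p) - 1 := by
  have e1 := Int.emod_add_mul_ediv (-a) p
  have e2 := Int.emod_add_mul_ediv a p
  rw [hz_neg_emod hp h] at e1
  have : p * ((-a) / p) = p * (-(a / p) - 1) := by linarith [e1, e2, mul_comm p ((-a)/p)]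
  exact mul_left_cancel₀ (ne_of_gt hp) this

private lemma hz_perm {p q : ℤ} (hp : 0 < p) (hcop : Int.gcd p q = 1) (F : ℤ → ℤ) :
    ∑ i ∈ Ico (1 : ℤ) p, F (i * q % p) = ∑ i ∈ Ico (1 : ℤ) p, F i := by
  obtain ⟨u, hu⟩ : ∃ u, p ∣ q * u - 1 := by
    refine ⟨p.gcdB q, ⟨-(p.gcdA q), ?_⟩⟩
    have := Int.gcd_eq_gcd_ab p q
    rw [hcop] at this
    push_cast at this
    linarith
  have key : ∀ i : ℤ, (i * q * u) % p = i % p := by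
    intro i
    obtain ⟨c, hc⟩ := hu
    have : i * q * u = i + p * (i * c) := by linear_combination i * hc
    rw [this, Int.add_mul_emod_self_left]
  have hmem : ∀ {a : ℤ}, a ∈ Ico (1:ℤ) p → ¬ p ∣ a * q → a * q % p ∈ Ico (1:ℤ) p := by
    intro a ha hnd
    obtain ⟨h1, h2⟩ := hz_emod_pos hp hnd
    simp [Finset.mem_Ico]; omega
  have hndq : ∀ {a : ℤ}, a ∈ Ico (1:ℤ) p → ¬ p ∣ a * q := by
    intro a ha
    simp [Finset.mem_Ico] at ha
    exact hz_not_dvd hp hcop ha.1 ha.2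
  have hndu : ∀ {a : ℤ}, a ∈ Ico (1:ℤ) p → ¬ p ∣ a * u := by
    intro a ha hd
    simp [Finset.mem_Ico] at ha
    have hd2 : p ∣ a * q * u := by
      have e : a * q * u = (a * u) * q := by ring
      rw [e]; exact hd.mul_right q
    have h0 : (a * q * u) % p = 0 := Int.emod_eq_zero_of_dvd hd2
    rw [key a, Int.emod_eq_of_lt (by omega) (by omega)] at h0
    omega
  have humem : ∀ {a : ℤ}, a ∈ Ico (1:ℤ) p → a * u % p ∈ Ico (1:ℤ) p := by
    intro a ha
    obtain ⟨h1, h2⟩ := hz_emod_pos hp (hndu ha)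
    simp [Finset.mem_Ico]; omega
  refine Finset.sum_nbij' (fun i => i * q % p) (fun j => j * u % p) ?_ ?_ ?_ ?_ ?_
  · intro a ha; exact hmem ha (hndq ha)
  · intro a ha; exact humem ha
  · intro a ha
    simp [Finset.mem_Ico] at ha
    show a * q % p * u % p = a
    rw [Int.mul_emod, Int.emod_emod_of_dvd _ dvd_rfl, ← Int.mul_emod, key,
      Int.emod_eq_of_lt (by omega) (by omega)]
  · intro a ha
    simp [Finset.mem_Ico] at ha
    show a * u % p * q % p = a
    rw [Int.mul_emod, Int.emod_emod_of_dvd _ dvd_rfl, ← Int.mul_emod]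
    have e : a * u * q = a * q * u := by ring
    rw [e, key, Int.emod_eq_of_lt (by omega) (by omega)]
  · intro a ha; rfl

private lemma hz_count {p q : ℤ} (hp : 0 < p) (hq : 0 < q) (hcop : Int.gcd p q = 1)
    {i : ℤ} (hi1 : 1 ≤ i) (hip : i < p) :
    (((Ico (1 : ℤ) q).filter fun j => j * p < i * q).card : ℤ) = i * q / p := by
  have hne : ∀ j : ℤ, 1 ≤ j → j < q → j * p ≠ i * q := by
    intro j h1 h2 he
    have hd : q ∣ j * p := ⟨i, by linarith⟩
    have hco : IsCoprime q p := Int.isCoprime_iff_gcd_eq_one.mpr (by rwa [Int.gcd_comm])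
    have : q ∣ j := hco.dvd_of_dvd_mul_right hd
    have := Int.le_of_dvd (by omega) this
    omega
  have hkey : ∀ j : ℤ, 1 ≤ j → j < q → (j * p < i * q ↔ j ≤ i * q / p) := by
    intro j h1 h2
    rw [Int.le_ediv_iff_mul_le hp]
    constructor
    · exact le_of_lt
    · intro h; exact lt_of_le_of_ne h (hne j h1 h2)
  have hub : i * q / p < q := by
    rw [Int.ediv_lt_iff_lt_mul hp]; nlinarith
  have hlb : 0 ≤ i * q / p := Int.ediv_nonneg (by positivity) hp.le
  have hset : (Ico (1 : ℤ) q).filter (fun j => j * p < i * q) = Ico (1:ℤ) (i * q / p + 1) := by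
    ext j
    simp only [Finset.mem_filter, Finset.mem_Ico]
    constructor
    · rintro ⟨⟨hj1, hj2⟩, hj3⟩
      exact ⟨hj1, by have := (hkey j hj1 hj2).1 hj3; omega⟩
    · rintro ⟨hj1, hj2⟩
      have hj2' : j ≤ i * q / p := by omega
      have hjq : j < q := by omega
      exact ⟨⟨hj1, hjq⟩, (hkey j hj1 hjq).2 hj2'⟩
  rw [hset, Int.card_Ico, Int.toNat_of_nonneg (by omega)]
  ring

private lemma hz_E2 {p q : ℤ} (hp : 0 < p) (hcop : Int.gcd p q = 1) :
    (∑ i ∈ Ico (1:ℤ) p, i * (i * q % p)) + p * ∑ i ∈ Ico (1:ℤ) p, i * (i * q / p)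
      = q * ∑ i ∈ Ico (1:ℤ) p, i ^ 2 := by
  rw [Finset.mul_sum, Finset.mul_sum, ← Finset.sum_add_distrib]
  refine Finset.sum_congr rfl fun i _ => ?_
  rw [Int.emod_def]; ring

private lemma hz_E1 {p q : ℤ} (hp : 0 < p) (hcop : Int.gcd p q = 1) :
    q ^ 2 * (∑ i ∈ Ico (1:ℤ) p, i ^ 2) + p ^ 2 * ∑ i ∈ Ico (1:ℤ) p, (i * q / p) ^ 2
      = (∑ i ∈ Ico (1:ℤ) p, i ^ 2) + 2 * p * q * ∑ i ∈ Ico (1:ℤ) p, i * (i * q / p) := by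
  have hperm := hz_perm hp hcop (fun x => x ^ 2)
  have expand : ∀ i ∈ Ico (1:ℤ) p, (i * q % p) ^ 2
      = q ^ 2 * i ^ 2 - 2 * p * q * (i * (i * q / p)) + p ^ 2 * (i * q / p) ^ 2 := by
    intro i _
    rw [Int.emod_def]; ring
  have h1 : (∑ i ∈ Ico (1:ℤ) p, i ^ 2)
      = ∑ i ∈ Ico (1:ℤ) p,
        (q ^ 2 * i ^ 2 - 2 * p * q * (i * (i * q / p)) + p ^ 2 * (i * q / p) ^ 2) := by
    rw [← Finset.sum_congr rfl expand]
    exact hperm.symm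
  rw [Finset.sum_add_distrib, Finset.sum_sub_distrib, ← Finset.mul_sum, ← Finset.mul_sum,
    ← Finset.mul_sum] at h1
  linarith

private lemma hz_E4 {p q : ℤ} (hp : 0 < p) (hq : 0 < q) (hcop : Int.gcd p q = 1) :
    2 * (∑ i ∈ Ico (1:ℤ) p, i * q / p) = (p - 1) * (q - 1) := by
  have hrefl : (∑ i ∈ Ico (1:ℤ) p, (i * q / p)) = ∑ i ∈ Ico (1:ℤ) p, ((p - i) * q / p) := by
    refine Finset.sum_nbij' (fun i => p - i) (fun i => p - i) ?_ ?_ ?_ ?_ ?_ <;>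
      intro a ha <;> simp [Finset.mem_Ico] at ha ⊢ <;> omega
  have hpt : ∀ i ∈ Ico (1:ℤ) p, i * q / p + (p - i) * q / p = q - 1 := by
    intro i hi
    simp [Finset.mem_Ico] at hi
    have hnd : ¬ p ∣ i * q := hz_not_dvd hp hcop hi.1 hi.2
    have e : (p - i) * q = -(i * q) + q * p := by ring
    rw [e, Int.add_mul_ediv_right _ _ (ne_of_gt hp), hz_neg_ediv hp hnd]
    ring
  have h2 : 2 * (∑ i ∈ Ico (1:ℤ) p, i * q / p)
      = ∑ i ∈ Ico (1:ℤ) p, (i * q / p + (p - i) * q / p) := by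
    rw [Finset.sum_add_distrib, ← hrefl]; ring
  rw [h2, Finset.sum_congr rfl hpt, Finset.sum_const, Int.card_Ico, nsmul_eq_mul,
    Int.toNat_of_nonneg (by omega : (0:ℤ) ≤ p - 1)]

private lemma hz_inner {p q m : ℤ} (hp : 0 < p) (hq : 0 < q) (hcop : Int.gcd p q = 1)
    (hm1 : 1 ≤ m) (hmq : m < q) :
    (∑ i ∈ Ico (1:ℤ) p, (if m * p < i * q then (1:ℤ) else 0)) = (p - 1) - m * p / q := by
  rw [Finset.sum_boole]
  have hcompl : (Ico (1:ℤ) p).filter (fun i => i * q < m * p)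
      = (Ico (1:ℤ) p).filter (fun i => ¬ (m * p < i * q)) := by
    refine Finset.filter_congr fun i hi => ?_
    simp only [Finset.mem_Ico] at hi
    have hne : i * q ≠ m * p := fun he => hz_not_dvd hp hcop hi.1 hi.2 ⟨m, by linarith⟩
    constructor <;> intro h <;> omega
  have hcard := Finset.card_filter_add_card_filter_not
    (s := Ico (1:ℤ) p) (p := fun i => m * p < i * q)
  have hB : ((((Ico (1:ℤ) p).filter fun i => i * q < m * p)).card : ℤ) = m * p / q := by
    exact hz_count hq hp (by rwa [Int.gcd_comm]) hm1 hmq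
  rw [hcompl] at hB
  have hcardP : ((Ico (1:ℤ) p).card : ℤ) = p - 1 := by
    rw [Int.card_Ico, Int.toNat_of_nonneg (by omega)]
  have := congrArg (Nat.cast : ℕ → ℤ) hcard
  push_cast at this
  rw [hcardP] at this
  linarith [hB, this]

private lemma hz_E3 {p q : ℤ} (hp : 0 < p) (hq : 0 < q) (hcop : Int.gcd p q = 1) :
    (∑ i ∈ Ico (1:ℤ) p, (i * q / p) ^ 2) + 2 * ∑ j ∈ Ico (1:ℤ) q, j * (j * p / q)
      = (q - 1) ^ 2 * (p - 1) + ∑ j ∈ Ico (1:ℤ) q, j * p / q := by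
  -- step 1: express (i*q/p)^2 as a double sum of indicators
  have step1 : ∀ i ∈ Ico (1:ℤ) p, (i * q / p) ^ 2
      = ∑ j ∈ Ico (1:ℤ) q, ∑ k ∈ Ico (1:ℤ) q,
          (if j * p < i * q ∧ k * p < i * q then (1:ℤ) else 0) := by
    intro i hi
    simp only [Finset.mem_Ico] at hi
    have hc : (((Ico (1 : ℤ) q).filter fun j => j * p < i * q).card : ℤ) = i * q / p :=
      hz_count hp hq hcop hi.1 hi.2
    have hcard : ((((Ico (1 : ℤ) q).filter fun j => j * p < i * q).card : ℤ))
        = ∑ j ∈ Ico (1:ℤ) q, (if j * p < i * q then (1:ℤ) else 0) := by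
      rw [Finset.sum_boole]
    rw [← hc, hcard, sq, Finset.sum_mul_sum]
    refine Finset.sum_congr rfl fun j _ => Finset.sum_congr rfl fun k _ => ?_
    by_cases h1 : j * p < i * q <;> by_cases h2 : k * p < i * q <;>
      simp [h1, h2]
  rw [Finset.sum_congr rfl step1]
  -- step 2: swap sums
  rw [Finset.sum_comm]
  have swapinner : ∀ j ∈ Ico (1:ℤ) q, ∑ i ∈ Ico (1:ℤ) p, ∑ k ∈ Ico (1:ℤ) q,
        (if j * p < i * q ∧ k * p < i * q then (1:ℤ) else 0)
      = ∑ k ∈ Ico (1:ℤ) q, ∑ i ∈ Ico (1:ℤ) p,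
        (if j * p < i * q ∧ k * p < i * q then (1:ℤ) else 0) := fun j _ => Finset.sum_comm
  rw [Finset.sum_congr rfl swapinner]
  -- step 3: innermost sum via hz_inner
  have step3 : ∀ j ∈ Ico (1:ℤ) q, ∀ k ∈ Ico (1:ℤ) q,
      (∑ i ∈ Ico (1:ℤ) p, (if j * p < i * q ∧ k * p < i * q then (1:ℤ) else 0))
        = (p - 1) - (max j k) * p / q := by
    intro j hj k hk
    simp only [Finset.mem_Ico] at hj hk
    have hmax : ∀ i : ℤ, (j * p < i * q ∧ k * p < i * q) ↔ (max j k) * p < i * q := by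
      intro i
      rw [max_mul_of_nonneg _ _ hp.le, max_lt_iff]
    rw [Finset.sum_congr rfl fun i _ => by rw [if_congr (hmax i) rfl rfl]]
    exact hz_inner hp hq hcop (by omega) (by cases le_total j k <;> simp [max_def] <;> omega)
  rw [Finset.sum_congr rfl fun j hj => Finset.sum_congr rfl (step3 j hj)]
  -- step 4: evaluate
  have step4 : ∀ j ∈ Ico (1:ℤ) q, (∑ k ∈ Ico (1:ℤ) q, ((p - 1) - (max j k) * p / q))
      = (q - 1) * (p - 1) - ∑ k ∈ Ico (1:ℤ) q, (max j k) * p / q := by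
    intro j _
    rw [Finset.sum_sub_distrib, Finset.sum_const, Int.card_Ico, nsmul_eq_mul,
      Int.toNat_of_nonneg (by omega : (0:ℤ) ≤ q - 1)]
  rw [Finset.sum_congr rfl step4, Finset.sum_sub_distrib, Finset.sum_const, Int.card_Ico,
    nsmul_eq_mul, Int.toNat_of_nonneg (by omega : (0:ℤ) ≤ q - 1)]
  rw [hz_maxsum (fun m => m * p / q) q (by omega)]
  have expand : ∀ m ∈ Ico (1:ℤ) q, (2 * m - 1) * (m * p / q)
      = 2 * (m * (m * p / q)) - (m * p / q) := fun m _ => by ring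
  rw [Finset.sum_congr rfl expand, Finset.sum_sub_distrib]
  have : (∑ m ∈ Ico (1:ℤ) q, 2 * (m * (m * p / q)))
      = 2 * ∑ m ∈ Ico (1:ℤ) q, m * (m * p / q) := by rw [Finset.mul_sum]
  rw [this]
  ring

private lemma hz_recip {p q : ℤ} (hp : 0 < p) (hq : 0 < q) (hcop : Int.gcd p q = 1) :
    12 * q ^ 2 * (∑ i ∈ Ico (1:ℤ) p, i * (i * q % p))
      + 12 * p ^ 2 * (∑ j ∈ Ico (1:ℤ) q, j * (j * p % q))
    = 3 * (p + q - 3) * p ^ 2 * q ^ 2 + p * q * (p ^ 2 + q ^ 2 + 1) := by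
  have hcop' : Int.gcd q p = 1 := by rwa [Int.gcd_comm]
  have e1 := hz_E1 hp hcop
  have e1' := hz_E1 hq hcop'
  have e2 := hz_E2 hp hcop
  have e2' := hz_E2 hq hcop'
  have e3 := hz_E3 hp hq hcop
  have e3' := hz_E3 hq hp hcop'
  have e4 := hz_E4 hp hq hcop
  have e4' := hz_E4 hq hp hcop'
  have s2 := hz_sum_sq p (by omega)
  have t2 := hz_sum_sq q (by omega)
  have h2 : 2 * (12 * q ^ 2 * (∑ i ∈ Ico (1:ℤ) p, i * (i * q % p))
      + 12 * p ^ 2 * (∑ j ∈ Ico (1:ℤ) q, j * (j * p % q)))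
      = 2 * (3 * (p + q - 3) * p ^ 2 * q ^ 2 + p * q * (p ^ 2 + q ^ 2 + 1)) := by
    linear_combination (6*q) * e1 + (6*p) * e1' + (24*q^2) * e2 + (24*p^2) * e2'
      + (-6*p^2*q) * e3 + (-6*p*q^2) * e3' + (-3*p*q^2) * e4 + (-3*p^2*q) * e4'
      + (3*q^3+q) * s2 + (3*p^3+p) * t2
  linarith

/-- Hirzebruch–Jung continued fraction. -/
def hjCF : List ℚ → ℚ
  | [] => 0
  | [a] => a
  | a :: b :: l => a - 1 / hjCF (b :: l)

/-- The sawtooth function `((x))`. -/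
def saw (x : ℚ) : ℚ := if x.den = 1 then 0 else x - ⌊x⌋ - 1 / 2

/-- The classical Dedekind sum `s(q,p) = Σ_{i=1}^{p-1} ((i/p))((iq/p))`. -/
noncomputable def dedekindSum (q p : ℤ) : ℚ :=
  ∑ i ∈ Finset.Ico (1 : ℤ) p, saw ((i : ℚ) / (p : ℚ)) * saw ((i : ℚ) * (q : ℚ) / (p : ℚ))

private lemma hz_saw {p a : ℤ} (hp : 0 < p) (h : ¬ p ∣ a) :
    saw ((a:ℚ)/(p:ℚ)) = ((a % p : ℤ) : ℚ)/(p:ℚ) - 1/2 := by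
  have hp0 : (p:ℚ) ≠ 0 := by
    simp only [ne_eq, Int.cast_eq_zero]; omega
  have hfl : ⌊(a:ℚ)/(p:ℚ)⌋ = a / p := by
    have hpn : ((p.toNat : ℕ) : ℚ) = (p:ℚ) := by exact_mod_cast Int.toNat_of_nonneg hp.le
    rw [← hpn, Rat.floor_intCast_div_natCast]
    congr 1
    exact_mod_cast Int.toNat_of_nonneg hp.le
  have hden : ((a:ℚ)/(p:ℚ)).den ≠ 1 := by
    intro hd
    apply h
    have h2 : ((a:ℚ)/(p:ℚ)) = (((a:ℚ)/(p:ℚ)).num : ℚ) := by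
      conv_lhs => rw [← Rat.num_div_den ((a:ℚ)/(p:ℚ))]
      rw [hd]; simp
    refine ⟨((a:ℚ)/(p:ℚ)).num, ?_⟩
    have h3 : (a:ℚ) = (p:ℚ) * (((a:ℚ)/(p:ℚ)).num : ℚ) := by
      rw [← h2]; field_simp
    exact_mod_cast h3
  have key : ((a % p : ℤ) : ℚ) = (a:ℚ) - (p:ℚ) * ((a / p : ℤ):ℚ) := by
    have := Int.emod_def a p
    exact_mod_cast congrArg (Int.cast : ℤ → ℚ) this
  rw [saw, if_neg hden, hfl, key]
  field_simp

private lemma hz_ds {p q : ℤ} (hp : 0 < p) (hcop : Int.gcd p q = 1) :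
    4 * (p:ℚ)^2 * dedekindSum q p
      = 4 * ((∑ i ∈ Ico (1:ℤ) p, i * (i * q % p) : ℤ) : ℚ) - (p:ℚ)^2 * ((p:ℚ) - 1) := by
  have hp0 : (p:ℚ) ≠ 0 := by simp only [ne_eq, Int.cast_eq_zero]; omega
  have hterm : ∀ i ∈ Ico (1:ℤ) p,
      saw ((i:ℚ)/(p:ℚ)) * saw ((i:ℚ)*(q:ℚ)/(p:ℚ))
      = ((i:ℚ)/p - 1/2) * (((i * q % p : ℤ):ℚ)/p - 1/2) := by
    intro i hi; simp only [Finset.mem_Ico] at hi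
    have h1 : ¬ p ∣ i := fun hd => by have := Int.le_of_dvd (by omega) hd; omega
    have h2 : ¬ p ∣ i * q := hz_not_dvd hp hcop hi.1 hi.2
    have e1 : saw ((i:ℚ)/(p:ℚ)) = ((i % p : ℤ):ℚ)/(p:ℚ) - 1/2 := hz_saw hp h1
    rw [Int.emod_eq_of_lt (by omega) (by omega)] at e1
    have e2 : (i:ℚ)*(q:ℚ)/(p:ℚ) = ((i * q : ℤ):ℚ)/(p:ℚ) := by push_cast; ring
    rw [e1, e2, hz_saw hp h2]
  have main : dedekindSum q p
      = ∑ i ∈ Ico (1:ℤ) p, (((i:ℚ)/p - 1/2) * (((i * q % p : ℤ):ℚ)/p - 1/2)) := by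
    simp only [dedekindSum]; exact Finset.sum_congr rfl hterm
  have hterm2 : ∀ i ∈ Ico (1:ℤ) p,
      4*(p:ℚ)^2 * (((i:ℚ)/p - 1/2) * (((i * q % p : ℤ):ℚ)/p - 1/2))
      = 4*((i:ℚ)*((i * q % p : ℤ):ℚ)) - 2*(p:ℚ)*(i:ℚ) - 2*(p:ℚ)*((i * q % p : ℤ):ℚ)
        + (p:ℚ)^2 := by
    intro i _; field_simp; ring
  have hcard : (((Ico (1:ℤ) p).card : ℕ) : ℚ) = (p:ℚ) - 1 := by
    rw [Int.card_Ico]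
    have h1 : ((p - 1).toNat : ℤ) = p - 1 := Int.toNat_of_nonneg (by omega)
    have h2 : (((p - 1).toNat : ℤ) : ℚ) = ((p : ℚ) - 1) := by rw [h1]; push_cast; ring
    exact_mod_cast h2
  rw [main, Finset.mul_sum, Finset.sum_congr rfl hterm2, Finset.sum_add_distrib,
    Finset.sum_sub_distrib, Finset.sum_sub_distrib, Finset.sum_const, nsmul_eq_mul, hcard]
  have c1 : (∑ i ∈ Ico (1:ℤ) p, 4*((i:ℚ)*((i * q % p : ℤ):ℚ)))
      = 4 * ((∑ i ∈ Ico (1:ℤ) p, i * (i * q % p) : ℤ) : ℚ) := by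
    push_cast
    rw [Finset.mul_sum]
  have c2 : (∑ i ∈ Ico (1:ℤ) p, 2*(p:ℚ)*(i:ℚ))
      = 2 * (p:ℚ) * ((∑ i ∈ Ico (1:ℤ) p, i : ℤ) : ℚ) := by
    push_cast
    rw [Finset.mul_sum]
  have c3 : (∑ i ∈ Ico (1:ℤ) p, 2*(p:ℚ)*((i * q % p : ℤ):ℚ))
      = 2 * (p:ℚ) * ((∑ i ∈ Ico (1:ℤ) p, i * q % p : ℤ) : ℚ) := by
    push_cast
    rw [Finset.mul_sum]
  rw [c1, c2, c3]
  have hpermz : (∑ i ∈ Ico (1:ℤ) p, i * q % p) = ∑ i ∈ Ico (1:ℤ) p, i :=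
    hz_perm hp hcop (fun x => x)
  have hgauss : 2 * (∑ i ∈ Ico (1:ℤ) p, i) = p * (p - 1) := hz_sum_id p (by omega)
  have hpermc : ((∑ i ∈ Ico (1:ℤ) p, i * q % p : ℤ) : ℚ) = ((∑ i ∈ Ico (1:ℤ) p, i : ℤ) : ℚ) := by
    exact_mod_cast congrArg (Int.cast : ℤ → ℚ) hpermz
  have hgaussc : 2 * ((∑ i ∈ Ico (1:ℤ) p, i : ℤ) : ℚ) = (p:ℚ) * ((p:ℚ) - 1) := by
    exact_mod_cast congrArg (Int.cast : ℤ → ℚ) hgauss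
  linear_combination (-2*(p:ℚ)) * hpermc + (-2*(p:ℚ)) * hgaussc

private lemma hz_flip {q p q' : ℤ} (hq : 0 < q) (hcop : Int.gcd q p = 1)
    (hcong : q' ≡ -p [ZMOD q]) :
    2 * ((∑ j ∈ Ico (1:ℤ) q, j * (j * q' % q)) + (∑ j ∈ Ico (1:ℤ) q, j * (j * p % q)))
      = q ^ 2 * (q - 1) := by
  have hpt : ∀ j ∈ Ico (1:ℤ) q, j * (j * q' % q) + j * (j * p % q) = j * q := by
    intro j hj; simp only [Finset.mem_Ico] at hj
    have hnd : ¬ q ∣ j * p := hz_not_dvd hq hcop hj.1 hj.2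
    have h1 : j * q' % q = (-(j * p)) % q := by
      have h2 := hcong.mul_left j
      have h3 : j * -p = -(j * p) := by ring
      rw [h3] at h2
      exact h2
    rw [h1, hz_neg_emod hq hnd]
    ring
  rw [← Finset.sum_add_distrib, Finset.sum_congr rfl hpt, ← Finset.sum_mul]
  have := hz_sum_id q (by omega)
  nlinarith [this]

private lemma hz_hjCF_gt_one : ∀ (l : List ℤ), l ≠ [] → (∀ x ∈ l, 2 ≤ x) →
    1 < hjCF (l.map fun x => (x : ℚ)) := by
  intro l
  induction l with
  | nil => simp
  | cons a t ih =>
    intro _ hx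
    cases t with
    | nil =>
      have h2 : (2:ℤ) ≤ a := hx a (by simp)
      have e : hjCF ([a].map fun x => (x:ℚ)) = (a:ℚ) := rfl
      rw [e]
      exact_mod_cast (by omega : (1:ℤ) < a)
    | cons b t2 =>
      have ht : 1 < hjCF ((b :: t2).map fun x => (x:ℚ)) :=
        ih (by simp) (fun x hx' => hx x (List.mem_cons_of_mem _ hx'))
      have ha : (2:ℚ) ≤ (a:ℚ) := by exact_mod_cast hx a (by simp)
      have e : hjCF ((a :: b :: t2).map fun x => (x:ℚ))
          = (a:ℚ) - 1 / hjCF ((b :: t2).map fun x => (x:ℚ)) := rfl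
      rw [e]
      have h0 : 0 < hjCF ((b :: t2).map fun x => (x:ℚ)) := by linarith
      have h1 : 1 / hjCF ((b :: t2).map fun x => (x:ℚ)) < 1 := by
        rw [div_lt_one h0]; linarith
      have h2 : 0 < 1 / hjCF ((b :: t2).map fun x => (x:ℚ)) := by positivity
      linarith

private theorem hz_aux : ∀ (a : List ℤ) (p q qs : ℤ), 0 < q → q < p →
    Int.gcd p q = 1 → 0 < qs → qs < p → q * qs ≡ 1 [ZMOD p] → (∀ x ∈ a, 2 ≤ x) →
    hjCF (a.map fun x => (x : ℚ)) = (p : ℚ) / q →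
    12 * dedekindSum q p = (a.map fun x => (x : ℚ) - 3).sum + ((q : ℚ) + qs) / p := by
  intro a
  induction a with
  | nil =>
    intro p q qs hq hqp hcop hqs hqsp hinv ha hhj
    exfalso
    have e : hjCF (([] : List ℤ).map fun x => (x:ℚ)) = 0 := rfl
    rw [e] at hhj
    have hppos : (0:ℚ) < (p:ℚ)/(q:ℚ) :=
      div_pos (by exact_mod_cast (by omega : (0:ℤ) < p)) (by exact_mod_cast hq)
    rw [← hhj] at hppos
    exact lt_irrefl _ hppos
  | cons a1 t ih =>
    intro p q qs hq hqp hcop hqs hqsp hinv ha hhj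
    have hp : 0 < p := by omega
    have hp0 : (p:ℚ) ≠ 0 := by
      simp only [ne_eq, Int.cast_eq_zero]; omega
    have hq0 : (q:ℚ) ≠ 0 := by
      simp only [ne_eq, Int.cast_eq_zero]; omega
    cases t with
    | nil =>
      have e : hjCF ([a1].map fun x => (x:ℚ)) = (a1:ℚ) := rfl
      rw [e] at hhj
      have h2 : a1 * q = p := by
        have h2' : (a1:ℚ) * q = p := by rw [hhj]; field_simp
        exact_mod_cast h2'
      have hq1 : q = 1 := by
        have hdvd : q ∣ p := ⟨a1, by linarith [h2, mul_comm a1 q]⟩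
        have hdg : q ∣ (Int.gcd p q : ℤ) := Int.dvd_coe_gcd hdvd dvd_rfl
        rw [hcop] at hdg
        have := Int.le_of_dvd one_pos hdg
        omega
      subst hq1
      have hqs1 : qs = 1 := by
        obtain ⟨c, hc⟩ := hinv.dvd
        have hc0 : c = 0 := by
          rcases lt_trichotomy c 0 with h | h | h
          · nlinarith
          · exact h
          · nlinarith
        rw [hc0] at hc
        omega
      subst hqs1
      have hpa : p = a1 := by omega
      have hcop1 : Int.gcd p 1 = 1 := by simp [Int.gcd]
      have hds := hz_ds hp hcop1
      have hA : (∑ i ∈ Ico (1:ℤ) p, i * (i * 1 % p)) = ∑ i ∈ Ico (1:ℤ) p, i ^ 2 := by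
        refine Finset.sum_congr rfl fun i hi => ?_
        simp only [Finset.mem_Ico] at hi
        rw [mul_one, Int.emod_eq_of_lt (by omega) (by omega)]
        ring
      rw [hA] at hds
      have hs2c : 6 * ((∑ i ∈ Ico (1:ℤ) p, i ^ 2 : ℤ) : ℚ)
          = ((p:ℚ) - 1) * p * (2*p - 1) := by
        exact_mod_cast congrArg (Int.cast : ℤ → ℚ) (hz_sum_sq p (by omega))
      have hlist : (([a1]).map fun x => (x:ℚ) - 3).sum = (a1:ℚ) - 3 := by simp
      rw [hlist]
      have hac : (a1:ℚ) = (p:ℚ) := by exact_mod_cast hpa.symm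
      rw [← hac] at hds hs2c ⊢
      have ha0 : (a1:ℚ) ≠ 0 := by rw [hac]; exact hp0
      have hexpand : (a1:ℚ) - 3 + (((1:ℤ):ℚ) + ((1:ℤ):ℚ)) / (a1:ℚ)
          = (((a1:ℚ) - 3) * (a1:ℚ)^2 + 2 * (a1:ℚ)) / (a1:ℚ)^2 := by
        field_simp
        ring
      rw [hexpand, eq_div_iff (pow_ne_zero 2 ha0)]
      linear_combination 3 * hds + 2 * hs2c
    | cons b t2 =>
      have htail : ∀ x ∈ (b :: t2), 2 ≤ x := fun x hx => ha x (List.mem_cons_of_mem _ hx)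
      have hgt : 1 < hjCF ((b :: t2).map fun x => (x:ℚ)) := hz_hjCF_gt_one _ (by simp) htail
      have hgt0 : 0 < hjCF ((b :: t2).map fun x => (x:ℚ)) := by linarith
      have hgne : hjCF ((b :: t2).map fun x => (x:ℚ)) ≠ 0 := ne_of_gt hgt0
      have e : hjCF ((a1 :: b :: t2).map fun x => (x:ℚ))
          = (a1:ℚ) - 1 / hjCF ((b :: t2).map fun x => (x:ℚ)) := rfl
      rw [e] at hhj
      have hq'c : ((a1 * q - p : ℤ):ℚ) = (a1:ℚ) * q - p := by push_cast; ring
      have hfrac : ((a1 * q - p : ℤ):ℚ)/(q:ℚ) = 1 / hjCF ((b :: t2).map fun x => (x:ℚ)) := by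
        rw [hq'c]
        have h1 : 1 / hjCF ((b :: t2).map fun x => (x:ℚ)) = (a1:ℚ) - (p:ℚ)/(q:ℚ) := by
          linarith [hhj]
        rw [h1]
        field_simp
      have hfracpos : 0 < ((a1 * q - p : ℤ):ℚ)/(q:ℚ) := by rw [hfrac]; positivity
      have hfraclt : ((a1 * q - p : ℤ):ℚ)/(q:ℚ) < 1 := by
        rw [hfrac, div_lt_one hgt0]; linarith
      have hqQ : (0:ℚ) < (q:ℚ) := by exact_mod_cast hq
      have hq'pos : 0 < a1 * q - p := by
        have h1 : (0:ℚ) < ((a1 * q - p : ℤ):ℚ) := by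
          have := mul_pos hfracpos hqQ
          rwa [div_mul_cancel₀ _ hq0] at this
        exact_mod_cast h1
      have hq'lt : a1 * q - p < q := by
        have h1 : ((a1 * q - p : ℤ):ℚ) < (q:ℚ) := by
          have := (div_lt_one hqQ).1 hfraclt
          exact this
        exact_mod_cast h1
      have hcop' : Int.gcd q (a1 * q - p) = 1 := by
        have hco : IsCoprime q p := (Int.isCoprime_iff_gcd_eq_one.mpr hcop).symm
        have hco2 : IsCoprime q (-p + q * a1) := (hco.neg_right).add_mul_left_right a1
        have e2 : -p + q * a1 = a1 * q - p := by ring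
        rw [e2] at hco2
        exact Int.isCoprime_iff_gcd_eq_one.mp hco2
      have hq'0 : ((a1 * q - p : ℤ):ℚ) ≠ 0 := by
        simp only [ne_eq, Int.cast_eq_zero]; omega
      have htailval : hjCF ((b :: t2).map fun x => (x:ℚ)) = (q:ℚ)/((a1 * q - p : ℤ):ℚ) := by
        rw [eq_div_iff hq'0]
        have h1 := (div_eq_div_iff hq0 hgne).mp hfrac
        linear_combination h1
      have hdvd : p ∣ q * qs - 1 := by
        have h1 := hinv.dvd
        have h2 : q * qs - 1 = -(1 - q * qs) := by ring
        rw [h2]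
        exact dvd_neg.mpr h1
      have hpt' : p * ((q * qs - 1) / p) = q * qs - 1 := Int.mul_ediv_cancel' hdvd
      have hq2 : 2 ≤ q := by omega
      have ht'pos : 0 < (q * qs - 1) / p := by
        have h2 : p ≤ q * qs - 1 := Int.le_of_dvd (by nlinarith) hdvd
        nlinarith [hpt']
      have ht'lt : (q * qs - 1) / p < q := by
        nlinarith [hpt']
      have hinv' : (a1 * q - p) * ((q * qs - 1) / p) ≡ 1 [ZMOD q] := by
        rw [Int.modEq_iff_dvd]
        exact ⟨qs - a1 * ((q * qs - 1) / p), by linear_combination hpt'⟩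
      have hIH := ih q (a1 * q - p) ((q * qs - 1) / p) hq'pos hq'lt hcop' ht'pos ht'lt hinv'
        htail (by rw [htailval])
      have hrecip := hz_recip hp hq hcop
      have hds1 := hz_ds hp hcop
      have hds2 := hz_ds hq hcop'
      have hcongr : (a1 * q - p) ≡ -p [ZMOD q] := by
        rw [Int.modEq_iff_dvd]
        exact ⟨-a1, by ring⟩
      have hflip := hz_flip hq (by rw [Int.gcd_comm]; exact hcop) hcongr
      -- cast the integer facts to ℚ
      have hrecipc : 12 * (q:ℚ) ^ 2 * ((∑ i ∈ Ico (1:ℤ) p, i * (i * q % p) : ℤ):ℚ)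
          + 12 * (p:ℚ) ^ 2 * ((∑ j ∈ Ico (1:ℤ) q, j * (j * p % q) : ℤ):ℚ)
          = 3 * ((p:ℚ) + q - 3) * p ^ 2 * q ^ 2 + p * q * ((p:ℚ) ^ 2 + q ^ 2 + 1) := by
        exact_mod_cast congrArg (Int.cast : ℤ → ℚ) hrecip
      have hflipc : 2 * (((∑ j ∈ Ico (1:ℤ) q, j * (j * (a1 * q - p) % q) : ℤ):ℚ)
          + ((∑ j ∈ Ico (1:ℤ) q, j * (j * p % q) : ℤ):ℚ)) = (q:ℚ) ^ 2 * ((q:ℚ) - 1) := by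
        exact_mod_cast congrArg (Int.cast : ℤ → ℚ) hflip
      have hpt'c : (p:ℚ) * (((q * qs - 1) / p : ℤ):ℚ) = (q:ℚ) * qs - 1 := by
        exact_mod_cast congrArg (Int.cast : ℤ → ℚ) hpt'
      -- rewrite the list sum
      have hsum : ((a1 :: b :: t2).map fun x => (x:ℚ) - 3).sum
          = ((a1:ℚ) - 3) + ((b :: t2).map fun x => (x:ℚ) - 3).sum := by
        simp
      rw [hsum]
      have htsum : ((b :: t2).map fun x => (x:ℚ) - 3).sum
          = 12 * dedekindSum (a1 * q - p) q
            - (((a1 * q - p : ℤ):ℚ) + (((q * qs - 1) / p : ℤ):ℚ))/(q:ℚ) := by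
        linarith [hIH]
      rw [htsum]
      have hexpand : ((a1:ℚ) - 3) + (12 * dedekindSum (a1 * q - p) q
            - (((a1 * q - p : ℤ):ℚ) + (((q * qs - 1) / p : ℤ):ℚ))/(q:ℚ))
          + ((q:ℚ) + qs) / p
          = ( (((a1:ℚ) - 3) + 12 * dedekindSum (a1 * q - p) q) * ((p:ℚ)^2 * (q:ℚ)^2)
              - (p:ℚ)^2 * (q:ℚ) * (((a1 * q - p : ℤ):ℚ) + (((q * qs - 1) / p : ℤ):ℚ))
              + (p:ℚ) * (q:ℚ)^2 * ((q:ℚ) + qs) ) / ((p:ℚ)^2 * (q:ℚ)^2) := by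
        field_simp
        ring
      rw [hexpand, eq_div_iff (by
        exact mul_ne_zero (pow_ne_zero 2 hp0) (pow_ne_zero 2 hq0))]
      linear_combination (3*(q:ℚ)^2) * hds1 + (-3*(p:ℚ)^2) * hds2 + hrecipc
        + (-6*(p:ℚ)^2) * hflipc + ((p:ℚ)^2*(q:ℚ)) * hq'c + ((p:ℚ)*(q:ℚ)) * hpt'c

/-- Hirzebruch–Zagier identity: `12 s(q,p) = Σ_j (a_j - 3) + (q + q*)/p`. -/
theorem hirzebruch_zagier (p q qs : ℤ) (hq : 0 < q) (hqp : q < p)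
    (hcop : Int.gcd p q = 1) (hqs : 0 < qs) (hqsp : qs < p)
    (hinv : q * qs ≡ 1 [ZMOD p])
    (a : List ℤ) (ha : ∀ x ∈ a, 2 ≤ x)
    (hhj : hjCF (a.map fun x => (x : ℚ)) = (p : ℚ) / q) :
    12 * dedekindSum q p = (a.map fun x => (x : ℚ) - 3).sum + ((q : ℚ) + qs) / p :=
  hz_aux a p q qs hq hqp hcop hqs hqsp hinv ha hhj
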